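/- Let S = Σ_{i=1}^n β_i X_i where each β_i ≠ 0 and X = (X_1,…,X_n) has independent ±1 coordinates with P[X_i = 1] = p_i ∈ [ε, 1−ε]. Then AC(S) := max_s P[S = s] ≤ C/√n for a constant C = C(ε) depending only on ε. -/

import Mathlib

open MeasureTheory

/-- The real value `±1` encoded by a Boolean. -/
noncomputable def pmOne (b : Bool) : ℝ := if b then 1 else -1

/-- Mass function of `n` independent `±1` features, where feature `i` equals `1`
(i.e. `true`) with probability `p i`. -/
noncomputable def bpMass {n : ℕ} (p : Fin n → ℝ) (x : Fin n → Bool) : ℝ :=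
  ∏ i, if x i then p i else 1 - p i

/-- The distribution `B_p` of `n` independent `±1` features with `P[X_i = 1] = p i`. -/
noncomputable def bpMeasure {n : ℕ} (p : Fin n → ℝ) : Measure (Fin n → Bool) :=
  ∑ x : Fin n → Bool, ENNReal.ofReal (bpMass p x) • Measure.dirac x

lemma natCB (k : ℕ) : (Nat.centralBinom k : ℝ)^2 * (k+1) ≤ 16^k := by
  induction k with
  | zero => simp [Nat.centralBinom]
  | succ k ih =>
    have h := Nat.succ_mul_centralBinom_succ k
    have h' : ((k:ℝ)+1) * Nat.centralBinom (k+1) = 2 * (2*k+1) * Nat.centralBinom k := by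
      exact_mod_cast congrArg (Nat.cast : ℕ → ℝ) h
    have h2 : (((k:ℝ)+1) * Nat.centralBinom (k+1))^2
        = (2 * (2*(k:ℝ)+1) * Nat.centralBinom k)^2 := by rw [h']
    have hpos : (0:ℝ) < ((k:ℝ)+1)^3 := by positivity
    rw [← mul_le_mul_iff_of_pos_right hpos]
    have key : ((Nat.centralBinom (k+1) : ℝ))^2 * ((k:ℕ)+1+1) * ((k:ℝ)+1)^3
        = (4 * (2*(k:ℝ)+1)^2 * ((k:ℝ)+2)) * ((Nat.centralBinom k : ℝ)^2 * ((k:ℝ)+1)) := by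
      push_cast
      linear_combination (((k:ℝ)+2)*((k:ℝ)+1)) * h2
    push_cast
    push_cast at key ih
    rw [key]
    have hcoef : (4 * (2*(k:ℝ)+1)^2 * ((k:ℝ)+2)) ≤ 16 * ((k:ℝ)+1)^3 := by nlinarith [k.cast_nonneg (α := ℝ)]
    calc (4 * (2*(k:ℝ)+1)^2 * ((k:ℝ)+2)) * ((Nat.centralBinom k : ℝ)^2 * ((k:ℝ)+1))
        ≤ (16 * ((k:ℝ)+1)^3) * (16^k) := by
          apply mul_le_mul hcoef ih (by positivity) (by positivity)
      _ = 16^(k+1) * ((k:ℝ)+1)^3 := by ring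


lemma chooseHalf (m : ℕ) : ((m.choose (m/2) : ℝ))^2 * (m+1) ≤ 2 * 4^m := by
  rcases Nat.even_or_odd m with ⟨k, hk⟩ | ⟨k, hk⟩
  · subst hk
    have h1 : (k+k)/2 = k := by omega
    have h2 : (k+k).choose k = Nat.centralBinom k := by
      rw [Nat.centralBinom]; congr 1; omega
    rw [h1, h2]
    have := natCB k
    have h4 : (16:ℝ)^k = 4^(k+k) := by
      rw [show (16:ℝ) = 4^2 by norm_num, ← pow_mul]; congr 1; omega
    push_cast
    nlinarith [Nat.cast_nonneg (α := ℝ) (Nat.centralBinom k), sq_nonneg ((Nat.centralBinom k : ℝ))]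
  · subst hk
    have h1 : (2*k+1)/2 = k := by omega
    rw [h1]
    have hsymm : (2*k+1).choose (k+1) = (2*k+1).choose k := by
      have := Nat.choose_symm (n := 2*k+1) (k := k+1) (by omega)
      have e : 2*k+1-(k+1) = k := by omega
      rw [e] at this; omega
    have hdouble : 2 * (2*k+1).choose k = Nat.centralBinom (k+1) := by
      rw [Nat.centralBinom]
      have e2 : 2*(k+1) = (2*k+1)+1 := by omega
      rw [e2, Nat.choose_succ_succ' (2*k+1) k, hsymm]
      omega
    have hR : (2:ℝ) * (2*k+1).choose k = Nat.centralBinom (k+1) := by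
      exact_mod_cast congrArg Nat.cast hdouble
    have h3 := natCB (k+1)
    have h4 : (16:ℝ)^(k+1) = 4 * 4^(2*k+1) := by
      rw [show (16:ℝ) = 4^2 by norm_num, ← pow_mul]
      rw [show 2*(k+1) = (2*k+1)+1 by omega, pow_succ]
      ring
    rw [← hR, h4] at h3
    push_cast at h3 ⊢
    have h6 : ((2*k+1).choose k : ℝ)^2*((k:ℝ)+2) ≤ 4^(2*k+1) := by nlinarith [h3]
    nlinarith [h6, sq_nonneg (((2*k+1).choose k : ℝ))]


lemma chooseHalf_sqrt (m : ℕ) :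
    ((m.choose (m/2) : ℝ)) ≤ Real.sqrt 2 * 2^m / Real.sqrt (m+1) := by
  have h := chooseHalf m
  have hm1 : (0:ℝ) < (m:ℝ)+1 := by positivity
  rw [le_div_iff₀ (Real.sqrt_pos.mpr hm1)]
  have h1 : (m.choose (m/2):ℝ) * Real.sqrt ((m:ℝ)+1)
      = Real.sqrt ((m.choose (m/2):ℝ)^2 * ((m:ℝ)+1)) := by
    rw [Real.sqrt_mul (by positivity), Real.sqrt_sq (by positivity)]
  rw [h1]
  have h2 : Real.sqrt (2*4^m) = Real.sqrt 2 * 2^m := by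
    rw [Real.sqrt_mul (by norm_num),
      show ((4:ℝ)^m) = (2^m)^2 by rw [← pow_mul, mul_comm, pow_mul]; norm_num,
      Real.sqrt_sq (by positivity)]
  rw [← h2]
  exact Real.sqrt_le_sqrt h


lemma sperner_count {n : ℕ} (T : Finset (Fin n)) (β : Fin n → ℝ) (hβ : ∀ i, 0 < β i)
    (s : ℝ) (y : Fin n → Bool) (A : Finset (Fin n → Bool))
    (hA : ∀ x ∈ A, (∀ i ∉ T, x i = y i) ∧ ∑ i, β i * pmOne (x i) = s) :
    A.card ≤ (T.card).choose (T.card / 2) := by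
  classical
  have key : ∀ x ∈ A, ∀ x' ∈ A, (∀ i ∈ T, x i = true → x' i = true) → x = x' := by
    intro x hx x' hx' hmono
    obtain ⟨hxy, hxs⟩ := hA x hx
    obtain ⟨hx'y, hx's⟩ := hA x' hx'
    have hterm : ∀ i : Fin n, 0 ≤ β i * (pmOne (x' i) - pmOne (x i)) := by
      intro i
      by_cases hiT : i ∈ T
      · cases hxi : x i with
        | true => rw [hmono i hiT hxi]; simp
        | false =>
          have h1 : pmOne false = -1 := rfl
          have h2 : -1 ≤ pmOne (x' i) := by cases x' i <;> simp [pmOne]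
          rw [h1]
          nlinarith [(hβ i).le]
      · rw [hxy i hiT, hx'y i hiT]; simp
    have hsum : ∑ i, β i * (pmOne (x' i) - pmOne (x i)) = 0 := by
      simp only [mul_sub]
      rw [Finset.sum_sub_distrib, hxs, hx's, sub_self]
    have hzero := (Finset.sum_eq_zero_iff_of_nonneg (fun i _ => hterm i)).mp hsum
    funext i
    have h0 := hzero i (Finset.mem_univ i)
    have hne := (hβ i).ne'
    have heq : pmOne (x' i) = pmOne (x i) := by
      rcases mul_eq_zero.mp h0 with h | h
      · exact absurd h hne
      · linarith [sub_eq_zero.mp h]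
    cases hxi : x i <;> cases hx'i : x' i <;> rw [hxi, hx'i] at heq <;>
      first | rfl | (norm_num [pmOne] at heq)
  set φ : (Fin n → Bool) → Finset {i // i ∈ T} :=
    fun x => Finset.univ.filter (fun i => x i.1 = true) with hφ
  have hmono : ∀ x ∈ A, ∀ x' ∈ A, φ x ⊆ φ x' → x = x' := by
    intro x hx x' hx' hsub
    refine key x hx x' hx' (fun i hiT hxi => ?_)
    have h1 : (⟨i, hiT⟩ : {i // i ∈ T}) ∈ φ x := by simp [hφ, hxi]
    have h2 := hsub h1
    simpa [hφ] using h2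
  have hinj : Set.InjOn φ A := fun x hx x' hx' hEq => hmono x hx x' hx' (le_of_eq hEq)
  have hanti : IsAntichain (· ⊆ ·)
      ((A.image φ : Finset (Finset {i // i ∈ T})) : Set (Finset {i // i ∈ T})) := by
    intro a ha b hb hne hab
    simp only [Finset.coe_image, Set.mem_image, Finset.mem_coe] at ha hb
    obtain ⟨x, hx, rfl⟩ := ha
    obtain ⟨x', hx', rfl⟩ := hb
    exact hne (congrArg φ (hmono x hx x' hx' hab))
  have hcard : A.card = (A.image φ).card := (Finset.card_image_of_injOn hinj).symm
  rw [hcard]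
  have hsp := IsAntichain.sperner hanti
  rwa [Fintype.card_coe] at hsp


lemma perT {n : ℕ} (ε : ℝ) (hε2 : ε ≤ 1/2) (p : Fin n → ℝ)
    (hp : ∀ i, p i ∈ Set.Icc ε (1-ε)) (β : Fin n → ℝ) (hβ : ∀ i, 0 < β i) (s : ℝ)
    (T : Finset (Fin n)) :
    ∑ x : Fin n → Bool, (if ∑ i, β i * pmOne (x i) = s then
        ∏ i ∈ Finset.univ \ T, ((if x i then p i else 1 - p i) - ε) else 0)
      ≤ (T.card.choose (T.card/2) : ℝ) * (1-2*ε)^(Finset.univ \ T : Finset (Fin n)).card := by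
  classical
  set b : Fin n → Bool → ℝ := fun i c => (if c then p i else 1 - p i) - ε with hb
  have hbnn : ∀ i c, 0 ≤ b i c := by
    intro i c
    obtain ⟨h1, h2⟩ := hp i
    cases c <;> simp [hb] <;> linarith
  have hbsum : ∀ i, b i true + b i false = 1 - 2*ε := by
    intro i; simp [hb]; ring
  set tfun : Fin n → Finset Bool := fun i => if i ∈ T then {false} else Finset.univ with htfun
  set proj : (Fin n → Bool) → (Fin n → Bool) := fun x i => if i ∈ T then false else x i with hproj
  have hmaps : ∀ x ∈ (Finset.univ : Finset (Fin n → Bool)), proj x ∈ Fintype.piFinset tfun := by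
    intro x _
    rw [Fintype.mem_piFinset]
    intro i
    by_cases hi : i ∈ T <;> simp [hproj, htfun, hi]
  set F : (Fin n → Bool) → ℝ := fun x => if ∑ i, β i * pmOne (x i) = s then
      ∏ i ∈ Finset.univ \ T, b i (x i) else 0 with hF
  have step1 : ∑ x : Fin n → Bool, F x
      = ∑ y ∈ Fintype.piFinset tfun, ∑ x ∈ Finset.univ.filter (fun x => proj x = y), F x :=
    (Finset.sum_fiberwise_of_maps_to hmaps F).symm
  have step2 : ∀ y ∈ Fintype.piFinset tfun,
      ∑ x ∈ Finset.univ.filter (fun x => proj x = y), F x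
        ≤ (T.card.choose (T.card/2) : ℝ) * ∏ i ∈ Finset.univ \ T, b i (y i) := by
    intro y _
    set c : ℝ := ∏ i ∈ Finset.univ \ T, b i (y i) with hc
    have hcnn : 0 ≤ c := Finset.prod_nonneg (fun i _ => hbnn i _)
    have hagree : ∀ x, proj x = y → ∀ i ∉ T, x i = y i := by
      intro x hxy i hi
      have := congrFun hxy i
      simpa [hproj, hi] using this
    have hFx : ∀ x ∈ Finset.univ.filter (fun x => proj x = y),
        F x = if ∑ i, β i * pmOne (x i) = s then c else 0 := by
      intro x hx
      rw [Finset.mem_filter] at hx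
      have : ∏ i ∈ Finset.univ \ T, b i (x i) = c := by
        apply Finset.prod_congr rfl
        intro i hi
        rw [Finset.mem_sdiff] at hi
        rw [hagree x hx.2 i hi.2]
      rw [hF]; simp only [this]
    rw [Finset.sum_congr rfl hFx, ← Finset.sum_filter, Finset.sum_const, nsmul_eq_mul]
    have hcount : ((Finset.univ.filter (fun x => proj x = y)).filter
        (fun x => ∑ i, β i * pmOne (x i) = s)).card ≤ T.card.choose (T.card/2) := by
      apply sperner_count T β hβ s y
      intro x hx
      simp only [Finset.mem_filter] at hx
      exact ⟨hagree x hx.1.2, hx.2⟩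
    calc (((Finset.univ.filter (fun x => proj x = y)).filter
            (fun x => ∑ i, β i * pmOne (x i) = s)).card : ℝ) * c
        ≤ (T.card.choose (T.card/2) : ℝ) * c := by
          apply mul_le_mul_of_nonneg_right _ hcnn
          exact_mod_cast hcount
      _ = _ := rfl
  have step3 : ∑ y ∈ Fintype.piFinset tfun, ∏ i ∈ Finset.univ \ T, b i (y i)
      = (1-2*ε)^(Finset.univ \ T : Finset (Fin n)).card := by
    set h : Fin n → Bool → ℝ := fun i c => if i ∈ T then 1 else b i c with hh
    have hext : ∀ y : Fin n → Bool, ∏ i ∈ Finset.univ \ T, b i (y i)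
        = ∏ i, h i (y i) := by
      intro y
      rw [← Finset.prod_sdiff (Finset.subset_univ T)]
      have h1 : ∏ i ∈ T, h i (y i) = 1 :=
        Finset.prod_eq_one (fun i hi => by simp [hh, hi])
      have h2 : ∏ i ∈ Finset.univ \ T, h i (y i)
          = ∏ i ∈ Finset.univ \ T, b i (y i) := by
        apply Finset.prod_congr rfl
        intro i hi
        rw [Finset.mem_sdiff] at hi
        simp [hh, hi.2]
      rw [h1, h2, mul_one]
    rw [Finset.sum_congr rfl (fun y _ => hext y), ← Finset.prod_univ_sum]
    have : ∀ i, (∑ c ∈ tfun i, h i c)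
        = if i ∈ T then 1 else (1 - 2*ε) := by
      intro i
      by_cases hi : i ∈ T
      · simp [hh, htfun, hi]
      · simp only [hh, htfun, hi, if_false]
        rw [show (Finset.univ : Finset Bool) = {true, false} by rfl]
        rw [Finset.sum_insert (by simp), Finset.sum_singleton]
        exact hbsum i
    rw [Finset.prod_congr rfl (fun i _ => this i)]
    rw [← Finset.prod_sdiff (Finset.subset_univ T)]
    have h1 : ∏ i ∈ T, (if i ∈ T then (1:ℝ) else (1-2*ε)) = 1 :=
      Finset.prod_eq_one (fun i hi => by simp [hi])
    have h2 : ∏ i ∈ Finset.univ \ T, (if i ∈ T then (1:ℝ) else (1-2*ε))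
        = (1-2*ε)^(Finset.univ \ T : Finset (Fin n)).card :=
      calc ∏ i ∈ Finset.univ \ T, (if i ∈ T then (1:ℝ) else (1-2*ε))
          = ∏ _i ∈ Finset.univ \ T, (1-2*ε) := Finset.prod_congr rfl (fun i hi => by
            rw [Finset.mem_sdiff] at hi; simp [hi.2])
        _ = _ := Finset.prod_const _
    rw [h1, h2, mul_one]
  calc ∑ x : Fin n → Bool, F x
      ≤ ∑ y ∈ Fintype.piFinset tfun, (T.card.choose (T.card/2) : ℝ) * ∏ i ∈ Finset.univ \ T, b i (y i) := by
        rw [step1]; exact Finset.sum_le_sum step2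
    _ = (T.card.choose (T.card/2) : ℝ) * ∑ y ∈ Fintype.piFinset tfun, ∏ i ∈ Finset.univ \ T, b i (y i) := by
        rw [Finset.mul_sum]
    _ = _ := by rw [step3]


lemma binomExp (n : ℕ) (t : ℝ) (ht : 0 < t) (ht1 : t ≤ 1) :
    ∑ k ∈ Finset.range (n+1), (n.choose k : ℝ) * t^k * (1-t)^(n-k) * (1/(k+1))
      ≤ 1/((n+1)*t) := by
  have hnt : (0:ℝ) < (n+1)*t := by positivity
  rw [le_div_iff₀ hnt]
  have key : ∀ k ∈ Finset.range (n+1),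
      (n.choose k : ℝ) * t^k * (1-t)^(n-k) * (1/(k+1)) * ((n+1)*t)
        = t^(k+1) * (1-t)^((n+1)-(k+1)) * ((n+1).choose (k+1) : ℝ) := by
    intro k hk
    rw [Finset.mem_range] at hk
    have hch : ((n:ℕ)+1) * n.choose k = (n+1).choose (k+1) * (k+1) := by
      rw [← Nat.add_one_mul_choose_eq]
    have hchR : ((n:ℝ)+1) * n.choose k = ((n+1).choose (k+1) : ℝ) * (k+1) := by
      exact_mod_cast congrArg (Nat.cast : ℕ → ℝ) hch
    have he : (n+1)-(k+1) = n-k := by omega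
    rw [he, pow_succ]
    have hk1 : ((k:ℝ)+1) ≠ 0 := by positivity
    field_simp
    linear_combination ((1-t)^(n-k)) * hchR
  rw [Finset.sum_mul, Finset.sum_congr rfl key]
  have hbin : ∑ j ∈ Finset.range (n+2), t^j * (1-t)^((n+1)-j) * ((n+1).choose j : ℝ) = 1 := by
    rw [← add_pow]
    norm_num
  rw [Finset.sum_range_succ'] at hbin
  have h0 : (0:ℝ) ≤ t^0 * (1-t)^((n+1)-0) * ((n+1).choose 0 : ℝ) := by
    have : (0:ℝ) ≤ 1 - t := by linarith
    positivity
  linarith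


lemma sumInvSqrt (n : ℕ) (t : ℝ) (ht : 0 < t) (ht1 : t ≤ 1) :
    ∑ k ∈ Finset.range (n+1), (n.choose k : ℝ) * t^k * (1-t)^(n-k) * (1/Real.sqrt (k+1))
      ≤ 1 / Real.sqrt ((n+1)*t) := by
  set w : ℕ → ℝ := fun k => (n.choose k : ℝ) * t^k * (1-t)^(n-k) with hw
  have hwnn : ∀ k, 0 ≤ w k := by
    intro k
    have : (0:ℝ) ≤ 1 - t := by linarith
    positivity
  set f : ℕ → ℝ := fun k => Real.sqrt (w k) with hf
  set g : ℕ → ℝ := fun k => Real.sqrt (w k) * (1/Real.sqrt (k+1)) with hg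
  have hfg : ∀ k, f k * g k = w k * (1/Real.sqrt (k+1)) := by
    intro k
    rw [hf, hg]
    rw [show Real.sqrt (w k) * (Real.sqrt (w k) * (1/Real.sqrt (k+1)))
      = (Real.sqrt (w k) * Real.sqrt (w k)) * (1/Real.sqrt (k+1)) by ring,
      Real.mul_self_sqrt (hwnn k)]
  have hf2 : ∀ k, f k ^ 2 = w k := fun k => Real.sq_sqrt (hwnn k)
  have hg2 : ∀ k, g k ^ 2 = w k * (1/(k+1)) := by
    intro k
    rw [hg, mul_pow, Real.sq_sqrt (hwnn k), one_div, one_div, ← Real.sqrt_inv, Real.sq_sqrt]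
    positivity
  have hsum1 : ∑ k ∈ Finset.range (n+1), w k = 1 := by
    have hb := add_pow t (1-t) n
    have h1 : t + (1-t) = (1:ℝ) := by ring
    rw [h1, one_pow] at hb
    rw [hb]
    exact Finset.sum_congr rfl (fun k _ => by rw [hw]; ring)
  have hCS := Finset.sum_mul_sq_le_sq_mul_sq (Finset.range (n+1)) f g
  have hLHS : ∑ k ∈ Finset.range (n+1), f k * g k
      = ∑ k ∈ Finset.range (n+1), w k * (1/Real.sqrt (k+1)) :=
    Finset.sum_congr rfl (fun k _ => hfg k)
  have hS2 : (∑ k ∈ Finset.range (n+1), w k * (1/Real.sqrt (k+1)))^2 ≤ 1/((n+1)*t) := by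
    rw [← hLHS]
    calc (∑ k ∈ Finset.range (n+1), f k * g k)^2
        ≤ (∑ k ∈ Finset.range (n+1), f k ^ 2) * ∑ k ∈ Finset.range (n+1), g k ^ 2 := hCS
      _ = (∑ k ∈ Finset.range (n+1), w k) * ∑ k ∈ Finset.range (n+1), w k * (1/(k+1)) := by
          rw [Finset.sum_congr rfl (fun k _ => hf2 k), Finset.sum_congr rfl (fun k _ => hg2 k)]
      _ ≤ 1 * (1/((n+1)*t)) := by
          rw [hsum1, one_mul, one_mul]
          have := binomExp n t ht ht1
          calc ∑ k ∈ Finset.range (n+1), w k * (1/(k+1))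
              = ∑ k ∈ Finset.range (n+1), (n.choose k : ℝ) * t^k * (1-t)^(n-k) * (1/(k+1)) := by
                apply Finset.sum_congr rfl; intro k _; rw [hw]
            _ ≤ _ := this
      _ = 1/((n+1)*t) := by rw [one_mul]
  have hSnn : 0 ≤ ∑ k ∈ Finset.range (n+1), w k * (1/Real.sqrt (k+1)) := by
    apply Finset.sum_nonneg
    intro k _
    have := hwnn k
    positivity
  have hfinal : ∑ k ∈ Finset.range (n+1), w k * (1/Real.sqrt (k+1))
      ≤ Real.sqrt (1/((n+1)*t)) := by
    rw [Real.le_sqrt hSnn (by positivity)]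
    exact hS2
  calc ∑ k ∈ Finset.range (n+1), (n.choose k : ℝ) * t^k * (1-t)^(n-k) * (1/Real.sqrt (k+1))
      = ∑ k ∈ Finset.range (n+1), w k * (1/Real.sqrt (k+1)) := by
        apply Finset.sum_congr rfl; intro k _; rw [hw]
    _ ≤ Real.sqrt (1/((n+1)*t)) := hfinal
    _ = 1 / Real.sqrt ((n+1)*t) := by
        rw [one_div, Real.sqrt_inv, one_div]


lemma keyPos (ε : ℝ) (hε : 0 < ε) (hε2 : ε ≤ 1/2) (n : ℕ)
    (p : Fin n → ℝ) (hp : ∀ i, p i ∈ Set.Icc ε (1-ε))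
    (β : Fin n → ℝ) (hβ : ∀ i, 0 < β i) (s : ℝ) :
    ∑ x : Fin n → Bool, (if ∑ i, β i * pmOne (x i) = s then bpMass p x else 0)
      ≤ 1 / Real.sqrt ((n+1)*ε) := by
  classical
  have h2e : (0:ℝ) < 2*ε := by linarith
  have h2e1 : 2*ε ≤ 1 := by linarith
  have h1m2e : (0:ℝ) ≤ 1-2*ε := by linarith
  set b : Fin n → Bool → ℝ := fun i c => (if c then p i else 1 - p i) - ε with hb
  -- step 1: expand the mass
  have hmass : ∀ x : Fin n → Bool, bpMass p x
      = ∑ T ∈ (Finset.univ : Finset (Fin n)).powerset,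
          ε^T.card * ∏ i ∈ Finset.univ \ T, b i (x i) := by
    intro x
    have h1 : bpMass p x = ∏ i, (ε + b i (x i)) := by
      apply Finset.prod_congr rfl
      intro i _
      rw [hb]; ring
    rw [h1, Finset.prod_add]
    apply Finset.sum_congr rfl
    intro T _
    rw [Finset.prod_const]
  have hswap : ∑ x : Fin n → Bool, (if ∑ i, β i * pmOne (x i) = s then bpMass p x else 0)
      = ∑ T ∈ (Finset.univ : Finset (Fin n)).powerset, ε^T.card *
          ∑ x : Fin n → Bool, (if ∑ i, β i * pmOne (x i) = s then
            ∏ i ∈ Finset.univ \ T, b i (x i) else 0) := by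
    calc ∑ x : Fin n → Bool, (if ∑ i, β i * pmOne (x i) = s then bpMass p x else 0)
        = ∑ x : Fin n → Bool, ∑ T ∈ (Finset.univ : Finset (Fin n)).powerset,
            (if ∑ i, β i * pmOne (x i) = s then ε^T.card * ∏ i ∈ Finset.univ \ T, b i (x i) else 0) := by
          apply Finset.sum_congr rfl
          intro x _
          by_cases hc : ∑ i, β i * pmOne (x i) = s
          · simp only [hc, if_true]
            exact hmass x
          · simp only [hc, if_false]
            exact Finset.sum_const_zero.symm
      _ = ∑ T ∈ (Finset.univ : Finset (Fin n)).powerset, ∑ x : Fin n → Bool,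
            (if ∑ i, β i * pmOne (x i) = s then ε^T.card * ∏ i ∈ Finset.univ \ T, b i (x i) else 0) :=
          Finset.sum_comm
      _ = _ := by
          apply Finset.sum_congr rfl
          intro T _
          rw [Finset.mul_sum]
          apply Finset.sum_congr rfl
          intro x _
          rw [mul_ite, mul_zero]
  rw [hswap]
  have hcard : ∀ T : Finset (Fin n), (Finset.univ \ T : Finset (Fin n)).card = n - T.card := by
    intro T
    rw [Finset.card_sdiff_of_subset (Finset.subset_univ T), Finset.card_univ, Fintype.card_fin]
  set G : ℕ → ℝ := fun k => Real.sqrt 2 * (2*ε)^k * (1-2*ε)^(n-k) * (1/Real.sqrt (k+1)) with hG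
  have hTbound : ∀ T ∈ (Finset.univ : Finset (Fin n)).powerset,
      ε^T.card * ∑ x : Fin n → Bool, (if ∑ i, β i * pmOne (x i) = s then
          ∏ i ∈ Finset.univ \ T, b i (x i) else 0) ≤ G T.card := by
    intro T _
    have h1 := perT ε hε2 p hp β hβ s T
    have hεk : (0:ℝ) ≤ ε^T.card := by positivity
    have h2 : ε^T.card * ∑ x : Fin n → Bool, (if ∑ i, β i * pmOne (x i) = s then
          ∏ i ∈ Finset.univ \ T, b i (x i) else 0)
        ≤ ε^T.card * ((T.card.choose (T.card/2) : ℝ) * (1-2*ε)^(n-T.card)) := by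
      rw [← hcard T]
      exact mul_le_mul_of_nonneg_left h1 hεk
    refine h2.trans ?_
    have h3 := chooseHalf_sqrt T.card
    have hpow : (0:ℝ) ≤ (1-2*ε)^(n-T.card) := by positivity
    have h4 : (T.card.choose (T.card/2) : ℝ) * (1-2*ε)^(n-T.card)
        ≤ (Real.sqrt 2 * 2^T.card / Real.sqrt (T.card+1)) * (1-2*ε)^(n-T.card) :=
      mul_le_mul_of_nonneg_right h3 hpow
    calc ε^T.card * ((T.card.choose (T.card/2) : ℝ) * (1-2*ε)^(n-T.card))
        ≤ ε^T.card * ((Real.sqrt 2 * 2^T.card / Real.sqrt (T.card+1)) * (1-2*ε)^(n-T.card)) :=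
          mul_le_mul_of_nonneg_left h4 hεk
      _ = G T.card := by
          rw [hG]
          simp only []
          rw [mul_pow 2 ε T.card]
          ring
  have hstepA : ∑ T ∈ (Finset.univ : Finset (Fin n)).powerset, ε^T.card *
          ∑ x : Fin n → Bool, (if ∑ i, β i * pmOne (x i) = s then
            ∏ i ∈ Finset.univ \ T, b i (x i) else 0)
      ≤ ∑ T ∈ (Finset.univ : Finset (Fin n)).powerset, G T.card :=
    Finset.sum_le_sum hTbound
  refine hstepA.trans ?_
  have hstepB : ∑ T ∈ (Finset.univ : Finset (Fin n)).powerset, G T.card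
      = ∑ j ∈ Finset.range (n+1), (n.choose j : ℝ) * G j := by
    rw [Finset.sum_powerset]
    rw [Finset.card_univ, Fintype.card_fin]
    apply Finset.sum_congr rfl
    intro j _
    rw [Finset.sum_powersetCard]
    rw [Finset.card_univ, Fintype.card_fin, nsmul_eq_mul]
  rw [hstepB]
  have hstepC : ∑ j ∈ Finset.range (n+1), (n.choose j : ℝ) * G j
      = Real.sqrt 2 * ∑ j ∈ Finset.range (n+1),
          (n.choose j : ℝ) * (2*ε)^j * (1-(2*ε))^(n-j) * (1/Real.sqrt (j+1)) := by
    rw [Finset.mul_sum]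
    apply Finset.sum_congr rfl
    intro j _
    rw [hG]
    ring_nf
  rw [hstepC]
  have hD := sumInvSqrt n (2*ε) h2e h2e1
  have hsqrt2 : (0:ℝ) < Real.sqrt 2 := by positivity
  have hfin : Real.sqrt 2 * (1 / Real.sqrt ((n+1)*(2*ε))) = 1 / Real.sqrt ((n+1)*ε) := by
    have : ((n:ℝ)+1)*(2*ε) = 2*(((n:ℝ)+1)*ε) := by ring
    rw [this, Real.sqrt_mul (by norm_num : (0:ℝ) ≤ 2)]
    rw [one_div, mul_inv, ← mul_assoc, mul_inv_cancel₀ hsqrt2.ne', one_mul, one_div]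
  calc Real.sqrt 2 * ∑ j ∈ Finset.range (n+1),
          (n.choose j : ℝ) * (2*ε)^j * (1-(2*ε))^(n-j) * (1/Real.sqrt (j+1))
      ≤ Real.sqrt 2 * (1 / Real.sqrt ((n+1)*(2*ε))) :=
        mul_le_mul_of_nonneg_left hD hsqrt2.le
    _ = 1 / Real.sqrt ((n+1)*ε) := hfin


lemma keyGen (ε : ℝ) (hε : 0 < ε) (hε2 : ε ≤ 1/2) (n : ℕ)
    (p : Fin n → ℝ) (hp : ∀ i, p i ∈ Set.Icc ε (1-ε))
    (β : Fin n → ℝ) (hβ : ∀ i, β i ≠ 0) (s : ℝ) :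
    ∑ x : Fin n → Bool, (if ∑ i, β i * pmOne (x i) = s then bpMass p x else 0)
      ≤ 1 / Real.sqrt ((n+1)*ε) := by
  classical
  set β' : Fin n → ℝ := fun i => |β i| with hβ'def
  set p' : Fin n → ℝ := fun i => if 0 < β i then p i else 1 - p i with hp'def
  set e : (Fin n → Bool) → (Fin n → Bool) := fun x i => if 0 < β i then x i else !(x i) with he
  have hinv : Function.Involutive e := by
    intro x
    funext i
    by_cases hi : 0 < β i <;> simp [he, hi]
  have hbij : Function.Bijective e := hinv.bijective
  have hp' : ∀ i, p' i ∈ Set.Icc ε (1-ε) := by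
    intro i
    obtain ⟨h1, h2⟩ := hp i
    by_cases hi : 0 < β i <;> simp only [hp'def, hi, if_true, if_false] <;>
      constructor <;> first | linarith | assumption
  have hβ'pos : ∀ i, 0 < β' i := fun i => abs_pos.mpr (hβ i)
  have hsum : ∀ x : Fin n → Bool, ∑ i, β' i * pmOne (e x i) = ∑ i, β i * pmOne (x i) := by
    intro x
    apply Finset.sum_congr rfl
    intro i _
    by_cases hi : 0 < β i
    · simp only [he, hβ'def, hi, if_true, abs_of_pos hi]
    · have hneg : β i < 0 := lt_of_le_of_ne (not_lt.mp hi) (hβ i)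
      simp only [he, hβ'def, hi, if_false, abs_of_neg hneg]
      cases x i <;> simp [pmOne] <;> ring
  have hmass : ∀ x : Fin n → Bool, bpMass p' (e x) = bpMass p x := by
    intro x
    apply Finset.prod_congr rfl
    intro i _
    by_cases hi : 0 < β i
    · simp only [he, hp'def, hi, if_true]
    · simp only [he, hp'def, hi, if_false]
      cases x i <;> simp
  calc ∑ x : Fin n → Bool, (if ∑ i, β i * pmOne (x i) = s then bpMass p x else 0)
      = ∑ x : Fin n → Bool, (if ∑ i, β' i * pmOne (e x i) = s then bpMass p' (e x) else 0) := by
        apply Finset.sum_congr rfl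
        intro x _
        rw [hsum x, hmass x]
    _ = ∑ x : Fin n → Bool, (if ∑ i, β' i * pmOne (x i) = s then bpMass p' x else 0) :=
        hbij.sum_comp (fun y => if ∑ i, β' i * pmOne (y i) = s then bpMass p' y else 0)
    _ ≤ 1 / Real.sqrt ((n+1)*ε) := keyPos ε hε hε2 n p' hp' β' hβ'pos s


lemma bpMeasure_apply {n : ℕ} (p : Fin n → ℝ) (hp : ∀ i, 0 ≤ p i ∧ p i ≤ 1)
    (A : Set (Fin n → Bool)) :
    (bpMeasure p A).toReal = ∑ x : Fin n → Bool, A.indicator (bpMass p) x := by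
  classical
  have hmass : ∀ x, 0 ≤ bpMass p x := by
    intro x
    apply Finset.prod_nonneg
    intro i _
    obtain ⟨h1, h2⟩ := hp i
    cases x i <;> simp <;> linarith
  have hterm : ∀ x : Fin n → Bool, (ENNReal.ofReal (bpMass p x) • Measure.dirac x) A
      = if x ∈ A then ENNReal.ofReal (bpMass p x) else 0 := by
    intro x
    rw [Measure.smul_apply, smul_eq_mul, Measure.dirac_apply, Set.indicator_apply]
    split <;> simp
  rw [bpMeasure, Measure.finset_sum_apply]
  rw [Finset.sum_congr rfl (fun x _ => hterm x)]
  rw [ENNReal.toReal_sum (by intro x _; split <;> simp)]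
  apply Finset.sum_congr rfl
  intro x _
  rw [Set.indicator_apply]
  split
  · exact ENNReal.toReal_ofReal (hmass x)
  · simp

/-- Littlewood–Offord-type anti-concentration: if `S = Σ β_i X_i` with all `β_i ≠ 0`
and `X_i` independent `±1` variables with `P[X_i = 1] = p_i ∈ [ε, 1−ε]`, then
`AC(S) = max_s P[S = s] ≤ C/√n` for a constant `C = C(ε)`. -/
theorem stmt_9 (ε : ℝ) (hε : 0 < ε) (hε2 : ε ≤ 1/2) :
    ∃ C : ℝ, 0 < C ∧
      ∀ n : ℕ, 0 < n → ∀ p : Fin n → ℝ, (∀ i, p i ∈ Set.Icc ε (1 - ε)) →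
        ∀ β : Fin n → ℝ, (∀ i, β i ≠ 0) →
        ∀ s : ℝ, (bpMeasure p {x | ∑ i, β i * pmOne (x i) = s}).toReal ≤
          C / Real.sqrt n := by
  classical
  refine ⟨(Real.sqrt ε)⁻¹, inv_pos.mpr (Real.sqrt_pos.mpr hε), ?_⟩
  intro n hn p hp β hβ s
  have hp01 : ∀ i, 0 ≤ p i ∧ p i ≤ 1 := fun i =>
    ⟨le_trans hε.le (hp i).1, le_trans (hp i).2 (by linarith)⟩
  rw [bpMeasure_apply p hp01]
  have hind : ∑ x : Fin n → Bool,
      Set.indicator {x : Fin n → Bool | ∑ i, β i * pmOne (x i) = s} (bpMass p) x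
      = ∑ x : Fin n → Bool, (if ∑ i, β i * pmOne (x i) = s then bpMass p x else 0) := by
    apply Finset.sum_congr rfl
    intro x _
    rw [Set.indicator_apply]
    simp only [Set.mem_setOf_eq]
  rw [hind]
  refine (keyGen ε hε hε2 n p hp β hβ s).trans ?_
  have hn1 : (1:ℝ) ≤ (n:ℝ) := by exact_mod_cast hn
  have hle : (n:ℝ)*ε ≤ ((n:ℝ)+1)*ε := by nlinarith
  have hpos : 0 < Real.sqrt ((n:ℝ)*ε) := Real.sqrt_pos.mpr (by nlinarith)
  calc 1 / Real.sqrt (((n:ℝ)+1)*ε) ≤ 1 / Real.sqrt ((n:ℝ)*ε) :=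
        one_div_le_one_div_of_le hpos (Real.sqrt_le_sqrt hle)
    _ = (Real.sqrt ε)⁻¹ / Real.sqrt (n:ℝ) := by
        rw [Real.sqrt_mul (Nat.cast_nonneg n), one_div, mul_inv, div_eq_mul_inv]
        ring
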